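/- Let 𝕆ω be a field of omega-series in a log-atomic monomial T. Let g ∈ 𝕆ω with g ≠ 0 and log|g| ≼ log T, and let s ∈ ℝ be such that log|g| − s·log T ≺ log T (equivalently T^{s−ε} ≺ g ≺ T^{s+ε} for every real ε > 0). Then: if s ≠ 0, g' ∼ s·g/T, so g' ≍ g/T; and if s = 0, then g' ≺ g/T. Moreover, if g ≉ 1 then log|g'| − (s−1)·log T ≺ log T. -/

import Mathlib

/-!
Interface axiomatization of fields of transseries and omega-series, following
Berarducci–Mantova.  We do not construct Hahn fields; instead we record, as a
structure, the properties of the field of omega-series `𝕆ω` in a log-atomic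
monomial `T` (an ordered field containing `ℝ`, with `exp`/`log`, the class `J`
of purely infinite series, and the strongly `ℝ`-linear derivation `D`), and,
as a second structure, the composition `f ∘ x` of omega-series `f` with
elements `x > ℝ` of a confluent field of transseries `𝕌` (confluence is
precisely what guarantees the existence of such a composition, which we take
as primitive data).
-/

/-- Dominance: `a ≼ b` iff `|a| ≤ n * |b|` for some natural number `n`. -/
def domLE {K : Type*} [Field K] [LinearOrder K] [IsStrictOrderedRing K] (a b : K) : Prop :=
  ∃ n : ℕ, |a| ≤ (n : K) * |b|

/-- `a ≺ b` iff `a ≼ b` and `¬ b ≼ a` (equivalently `n * |a| < |b|` for all `n`). -/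
def domLT {K : Type*} [Field K] [LinearOrder K] [IsStrictOrderedRing K] (a b : K) : Prop :=
  domLE a b ∧ ¬ domLE b a

/-- `a ≍ b` iff `a ≼ b` and `b ≼ a`. -/
def domEq {K : Type*} [Field K] [LinearOrder K] [IsStrictOrderedRing K] (a b : K) : Prop :=
  domLE a b ∧ domLE b a

/-- Asymptotic equivalence: `a ∼ b` iff `a - b ≺ a`. -/
def domSim {K : Type*} [Field K] [LinearOrder K] [IsStrictOrderedRing K] (a b : K) : Prop :=
  domLT (a - b) a

/-- `x > ℝ`: `x` is larger than every real number (via the embedding `emb`). -/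
def gtReals {K : Type*} [Field K] [LinearOrder K] [IsStrictOrderedRing K] (emb : ℝ →+* K) (x : K) : Prop :=
  ∀ r : ℝ, emb r < x

/-- Interface for a field of omega-series `𝕆ω` in a log-atomic monomial `T`:
an ordered field containing `ℝ`, equipped with `exp` and `log`, the
distinguished log-atomic element `T > ℝ`, the additive group `J` of purely
infinite series, and the strongly `ℝ`-linear derivation `D` determined by
`D T = 1` and `D (exp γ) = exp γ * D γ`. -/
structure OmegaFieldStruct (O : Type*) [Field O] [LinearOrder O] [IsStrictOrderedRing O] where
  /-- the embedding of the real numbers (series with a single constant term) -/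
  emb : ℝ →+* O
  /-- the log-atomic monomial `T` -/
  T : O
  /-- the (total) exponential, inverse of `log` -/
  exp : O → O
  /-- the logarithm (meaningful on positive elements) -/
  log : O → O
  /-- the class of purely infinite series -/
  J : Set O
  /-- the derivation -/
  D : O → O
  T_gt_reals : gtReals emb T
  exp_add : ∀ a b : O, exp (a + b) = exp a * exp b
  exp_pos : ∀ a : O, 0 < exp a
  exp_strictMono : StrictMono exp
  log_exp : ∀ a : O, log (exp a) = a
  exp_log : ∀ a : O, 0 < a → exp (log a) = a
  exp_emb : ∀ r : ℝ, exp (emb r) = emb (Real.exp r)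
  /-- growth axiom: `(log 𝔪)^n < 𝔪`, extended to all positive infinite elements -/
  log_pow_lt : ∀ a : O, gtReals emb a → ∀ n : ℕ, (log a) ^ n < a
  J_zero : (0 : O) ∈ J
  J_add : ∀ a ∈ J, ∀ b ∈ J, a + b ∈ J
  J_neg : ∀ a ∈ J, -a ∈ J
  /-- purely infinite series are either zero or dominate `1` -/
  J_infinite : ∀ γ ∈ J, γ ≠ 0 → domLT 1 γ
  /-- `T` is log-atomic: its iterated logarithms are monomials `> 1`,
  hence purely infinite -/
  logIter_T_mem_J : ∀ n : ℕ, (log)^[n] T ∈ J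
  D_add : ∀ a b : O, D (a + b) = D a + D b
  D_mul : ∀ a b : O, D (a * b) = D a * b + a * D b
  D_T : D T = 1
  D_emb : ∀ r : ℝ, D (emb r) = 0
  D_exp : ∀ a : O, D (exp a) = exp a * D a
  /-- the H-field property: positive infinite elements have positive derivative -/
  D_pos_of_gt_reals : ∀ a : O, gtReals emb a → 0 < D a
  /-- the constants of the derivation are exactly the reals -/
  D_eq_zero_iff : ∀ a : O, D a = 0 ↔ ∃ r : ℝ, a = emb r

/-- Interface for the composition of omega-series by elements `x > ℝ` of a
confluent field of transseries `U`: for each such `x`, `f ↦ comp f x` is the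
unique strongly `ℝ`-linear ordered field embedding with `comp T x = x` and
`comp (exp γ) x = expU (comp γ x)`.  Confluence of `U` is what guarantees the
existence of this composition, which we take as primitive data. -/
structure CompStruct (O U : Type*) [Field O] [LinearOrder O] [IsStrictOrderedRing O] [Field U] [LinearOrder U] [IsStrictOrderedRing U]
    (Ω : OmegaFieldStruct O) where
  /-- the embedding of the real numbers into `U` -/
  embU : ℝ →+* U
  /-- the exponential of `U` -/
  expU : U → U
  /-- the logarithm of `U` (meaningful on positive elements) -/
  logU : U → U
  /-- the composition `f ∘ x` of an omega-series `f` with `x ∈ U`,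
  meaningful for `x > ℝ` -/
  comp : O → U → U
  expU_add : ∀ a b : U, expU (a + b) = expU a * expU b
  expU_pos : ∀ a : U, 0 < expU a
  expU_strictMono : StrictMono expU
  logU_expU : ∀ a : U, logU (expU a) = a
  expU_logU : ∀ a : U, 0 < a → expU (logU a) = a
  comp_add : ∀ (f g : O) (x : U), gtReals embU x →
    comp (f + g) x = comp f x + comp g x
  comp_mul : ∀ (f g : O) (x : U), gtReals embU x →
    comp (f * g) x = comp f x * comp g x
  comp_emb : ∀ (r : ℝ) (x : U), gtReals embU x → comp (Ω.emb r) x = embU r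
  comp_T : ∀ x : U, gtReals embU x → comp Ω.T x = x
  comp_exp : ∀ (f : O) (x : U), gtReals embU x →
    comp (Ω.exp f) x = expU (comp f x)
  comp_log : ∀ (f : O) (x : U), gtReals embU x → 0 < f →
    comp (Ω.log f) x = logU (comp f x)
  /-- right composition is an ordered field embedding -/
  comp_strictMono : ∀ x : U, gtReals embU x → StrictMono fun f : O => comp f x

section DomLemmas

variable {K : Type*} [Field K] [LinearOrder K] [IsStrictOrderedRing K]

theorem domLT_iff {a b : K} : domLT a b ↔ ∀ n : ℕ, (n : K) * |a| < |b| := by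
  constructor
  · rintro ⟨_, h2⟩ n
    by_contra hc
    exact h2 ⟨n, not_lt.1 hc⟩
  · intro h
    refine ⟨⟨1, ?_⟩, ?_⟩
    · have := h 1
      push_cast at this ⊢
      linarith
    · rintro ⟨n, hn⟩
      exact absurd hn (not_le.2 (h n))

theorem domLT_add {a b c : K} (ha : domLT a c) (hb : domLT b c) :
    domLT (a + b) c := by
  rw [domLT_iff] at ha hb ⊢
  intro n
  have h1 := ha (2 * n)
  have h2 := hb (2 * n)
  have h3 : |a + b| ≤ |a| + |b| := abs_add_le a b
  push_cast at h1 h2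
  nlinarith [abs_nonneg a, abs_nonneg b, abs_nonneg (a + b)]

end DomLemmas

section OmegaAux

variable {O : Type*} [Field O] [LinearOrder O] [IsStrictOrderedRing O] (Ω : OmegaFieldStruct O)

theorem emb_nonneg {r : ℝ} (hr : 0 ≤ r) : 0 ≤ Ω.emb r := by
  have : Ω.emb r = (Ω.emb (Real.sqrt r)) ^ 2 := by
    rw [← map_pow, Real.sq_sqrt hr]
  rw [this]; positivity

theorem emb_mono : Monotone Ω.emb := by
  intro r t h
  have := emb_nonneg Ω (sub_nonneg.2 h)
  rw [map_sub] at this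
  linarith

theorem emb_strictMono : StrictMono Ω.emb :=
  (emb_mono Ω).strictMono_of_injective Ω.emb.injective

theorem emb_pos {r : ℝ} (hr : 0 < r) : 0 < Ω.emb r := by
  have := emb_strictMono Ω hr
  rwa [map_zero] at this

theorem emb_abs (r : ℝ) : |Ω.emb r| = Ω.emb |r| := by
  rcases le_or_gt 0 r with h | h
  · rw [abs_of_nonneg h, abs_of_nonneg (emb_nonneg Ω h)]
  · rw [abs_of_neg h, abs_of_neg, map_neg]
    have := emb_strictMono Ω h
    rwa [map_zero] at this

theorem gt_pos {a : O} (h : gtReals Ω.emb a) : 0 < a := by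
  have := h 0; rwa [map_zero] at this

theorem gt_nat {a : O} (h : gtReals Ω.emb a) (n : ℕ) : (n : O) < a := by
  have := h n; rwa [map_natCast] at this

theorem gtReals_of_nat {a : O} (h : ∀ n : ℕ, (n : O) < a) : gtReals Ω.emb a := by
  intro r
  obtain ⟨n, hn⟩ := exists_nat_ge r
  exact lt_of_le_of_lt (by rw [← map_natCast Ω.emb n]; exact emb_mono Ω hn) (h n)

theorem gt_mono {a b : O} (h : gtReals Ω.emb a) (hab : a ≤ b) : gtReals Ω.emb b :=
  fun r => lt_of_lt_of_le (h r) hab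

theorem exp_zero' : Ω.exp 0 = 1 := by
  have := Ω.exp_emb 0
  rw [map_zero, Real.exp_zero, map_one] at this
  exact this

theorem log_one' : Ω.log 1 = 0 := by
  rw [← exp_zero' Ω, Ω.log_exp]

theorem log_lt_log' {a b : O} (ha : 0 < a) (hab : a < b) : Ω.log a < Ω.log b := by
  by_contra h
  push_neg at h
  have := Ω.exp_strictMono.monotone h
  rw [Ω.exp_log a ha, Ω.exp_log b (ha.trans hab)] at this
  linarith

theorem log_mul' {a b : O} (ha : 0 < a) (hb : 0 < b) :
    Ω.log (a * b) = Ω.log a + Ω.log b := by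
  have : Ω.exp (Ω.log a + Ω.log b) = a * b := by
    rw [Ω.exp_add, Ω.exp_log a ha, Ω.exp_log b hb]
  rw [← this, Ω.log_exp]

theorem exp_neg' (a : O) : Ω.exp (-a) = (Ω.exp a)⁻¹ := by
  have h : Ω.exp a * Ω.exp (-a) = 1 := by
    rw [← Ω.exp_add, add_neg_cancel, exp_zero' Ω]
  have hp := Ω.exp_pos a
  field_simp
  linarith [h]

theorem log_inv' {a : O} (ha : 0 < a) : Ω.log a⁻¹ = -Ω.log a := by
  rw [← Ω.log_exp (-Ω.log a), exp_neg' Ω, Ω.exp_log a ha]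

theorem exp_gtReals {a : O} (h : gtReals Ω.emb a) : gtReals Ω.emb (Ω.exp a) := by
  intro r
  have h1 : r < Real.exp r := by linarith [Real.add_one_le_exp r]
  calc Ω.emb r < Ω.emb (Real.exp r) := emb_strictMono Ω h1
    _ = Ω.exp (Ω.emb r) := (Ω.exp_emb r).symm
    _ < Ω.exp a := Ω.exp_strictMono (h r)

theorem log_gtReals {a : O} (h : gtReals Ω.emb a) : gtReals Ω.emb (Ω.log a) := by
  intro r
  have h1 : Ω.exp (Ω.emb r) < Ω.exp (Ω.log a) := by
    rw [Ω.exp_emb, Ω.exp_log a (gt_pos Ω h)]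
    exact h _
  exact Ω.exp_strictMono.lt_iff_lt.mp h1

end OmegaAux
section OmegaAux2

variable {O : Type*} [Field O] [LinearOrder O] [IsStrictOrderedRing O] (Ω : OmegaFieldStruct O)

theorem D_zero' : Ω.D 0 = 0 := by
  have := Ω.D_emb 0
  rwa [map_zero] at this

theorem D_neg' (a : O) : Ω.D (-a) = -Ω.D a := by
  have := Ω.D_add a (-a)
  rw [add_neg_cancel, D_zero' Ω] at this
  linarith

theorem D_emb_mul (r : ℝ) (a : O) : Ω.D (Ω.emb r * a) = Ω.emb r * Ω.D a := by
  rw [Ω.D_mul, Ω.D_emb]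
  ring

theorem D_nat_mul (n : ℕ) (a : O) : Ω.D ((n : O) * a) = (n : O) * Ω.D a := by
  rw [← map_natCast Ω.emb n, D_emb_mul]

theorem T_pos : (0 : O) < Ω.T := gt_pos Ω Ω.T_gt_reals

theorem D_log' {a : O} (ha : 0 < a) : a * Ω.D (Ω.log a) = Ω.D a := by
  conv_rhs => rw [← Ω.exp_log a ha]
  rw [Ω.D_exp, Ω.exp_log a ha]

theorem gtReals_logT : gtReals Ω.emb (Ω.log Ω.T) :=
  log_gtReals Ω Ω.T_gt_reals

theorem D_logT : Ω.D (Ω.log Ω.T) = Ω.T⁻¹ := by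
  have h := D_log' Ω (T_pos Ω)
  rw [Ω.D_T] at h
  exact (eq_inv_of_mul_eq_one_left (by linarith [h] : Ω.D (Ω.log Ω.T) * Ω.T = 1))

/-- The key H-field estimate: if `x ≺ y` and `y > ℝ` then `n·|x'| < y'`. -/
theorem D_lt_of_domLT {x y : O} (hxy : domLT x y) (hy : gtReals Ω.emb y)
    (n : ℕ) : (n : O) * |Ω.D x| < Ω.D y := by
  have hy0 : 0 < y := gt_pos Ω hy
  have h2n : ((2 * n : ℕ) : O) * |x| < |y| := domLT_iff.1 hxy (2 * n)
  rw [abs_of_pos hy0] at h2n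
  push_cast at h2n
  have habs : 0 ≤ (n : O) * |x| := by positivity
  have key : ∀ z : O, |z| ≤ (n : O) * |x| → gtReals Ω.emb (y + z) := by
    intro z hz r
    have h1 : Ω.emb (2 * r) < y := hy (2 * r)
    rw [map_mul, map_ofNat] at h1
    have h2 : -((n : O) * |x|) ≤ z := by
      have := neg_abs_le z; linarith
    nlinarith [abs_nonneg x]
  have k1 := Ω.D_pos_of_gt_reals _ (key ((n : O) * x) (by
    rw [abs_mul, abs_of_nonneg (by positivity : (0:O) ≤ (n:O))]))
  have k2 := Ω.D_pos_of_gt_reals _ (key (-((n : O) * x)) (by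
    rw [abs_neg, abs_mul, abs_of_nonneg (by positivity : (0:O) ≤ (n:O))]))
  rw [Ω.D_add, D_nat_mul] at k1
  rw [Ω.D_add, D_neg', D_nat_mul] at k2
  rcases abs_cases (Ω.D x) with ⟨h, _⟩ | ⟨h, _⟩ <;> rw [h] <;> nlinarith

theorem D_domLT {x y : O} (hxy : domLT x y) (hy : gtReals Ω.emb y) :
    domLT (Ω.D x) (Ω.D y) := by
  rw [domLT_iff]
  intro n
  have := D_lt_of_domLT Ω hxy hy n
  rwa [abs_of_pos (Ω.D_pos_of_gt_reals _ hy)]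

/-- Lower bound on derivatives of positive infinite elements:
`T·m' > exp(-(1/n)·log T)`. -/
theorem crux {m : O} (hm : gtReals Ω.emb m) (n : ℕ) (hn : 1 ≤ n) :
    Ω.exp (Ω.emb (-(1 / n)) * Ω.log Ω.T) < Ω.T * Ω.D m := by
  set L := Ω.log Ω.T with hL
  have hLgt : gtReals Ω.emb L := gtReals_logT Ω
  have hn' : (0 : ℝ) < (n : ℝ) := by positivity
  set ε : ℝ := 1 / (2 * n) with hε
  have hεpos : 0 < ε := by positivity
  set c := Ω.emb ε * L with hc
  have hcgt : gtReals Ω.emb c := by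
    intro r
    have h1 : Ω.emb (r / ε) < L := hLgt _
    have := mul_lt_mul_of_pos_left h1 (emb_pos Ω hεpos)
    rw [← map_mul] at this
    rw [hc]
    convert this using 2
    field_simp
  set x := Ω.exp (-c) with hx
  have hx0 : 0 < x := Ω.exp_pos _
  have hx1 : x < 1 := by
    rw [hx, ← exp_zero' Ω]
    apply Ω.exp_strictMono
    have := gt_pos Ω hcgt
    linarith
  have hxm : domLT x m := by
    rw [domLT_iff]
    intro k
    rw [abs_of_pos hx0, abs_of_pos (gt_pos Ω hm)]
    calc (k : O) * x ≤ (k : O) * 1 := by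
          apply mul_le_mul_of_nonneg_left (le_of_lt hx1) (by positivity)
      _ < m := by rw [mul_one]; exact_mod_cast gt_nat Ω hm k
  have hDx := D_lt_of_domLT Ω hxm hm 1
  rw [Nat.cast_one, one_mul] at hDx
  have hDxval : |Ω.D x| = x * Ω.emb ε * Ω.T⁻¹ := by
    rw [hx, Ω.D_exp, D_neg', hc, D_emb_mul, D_logT]
    rw [abs_mul, abs_neg, abs_mul, abs_of_pos (Ω.exp_pos _),
      abs_of_pos (emb_pos Ω hεpos), abs_of_pos (inv_pos.2 (T_pos Ω))]
    ring_nf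
  rw [hDxval] at hDx
  have hT := T_pos Ω
  -- x * emb ε < T * D m
  have h1 : x * Ω.emb ε < Ω.T * Ω.D m := by
    have := mul_lt_mul_of_pos_left hDx hT
    calc x * Ω.emb ε = Ω.T * (x * Ω.emb ε * Ω.T⁻¹) := by field_simp
      _ < Ω.T * Ω.D m := this
  -- exp(-(1/n) L) = x * x ≤ x * emb ε
  have hsplit : Ω.emb (-(1 / n)) * L = -c + -c := by
    have h2ε : -(1 / (n : ℝ)) = -ε + -ε := by
      rw [hε]; field_simp; ring
    rw [h2ε, hc, map_add, map_neg]
    ring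
  rw [hsplit, Ω.exp_add, ← hx]
  -- x ≤ emb ε
  have hxε : x ≤ Ω.emb ε := by
    have hec : Ω.emb (2 * n) < Ω.exp c := exp_gtReals Ω hcgt _
    have h2 : Ω.emb ε * Ω.exp c > 1 := by
      have := mul_lt_mul_of_pos_left hec (emb_pos Ω hεpos)
      rw [← map_mul] at this
      have heq : ε * (2 * n) = 1 := by rw [hε]; field_simp
      rwa [heq, map_one] at this
    have h3 : x * Ω.exp c = 1 := by
      rw [hx, ← Ω.exp_add, neg_add_cancel, exp_zero' Ω]
    have hec0 : 0 < Ω.exp c := Ω.exp_pos _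
    nlinarith
  nlinarith

end OmegaAux2

set_option maxHeartbeats 2000000 in
/-- Let `g ∈ 𝕆ω` with `g ≠ 0` and `log|g| ≼ log T`, and let `s ∈ ℝ` be such
that `log|g| − s·log T ≺ log T`.  Then: if `s ≠ 0`, `g' ∼ s·g/T`, so
`g' ≍ g/T`; if `s = 0`, then `g' ≺ g/T`.  Moreover, if `g ≉ 1` then
`log|g'| − (s−1)·log T ≺ log T`. -/
theorem statement15 {O : Type*} [Field O] [LinearOrder O] [IsStrictOrderedRing O]
    (Ω : OmegaFieldStruct O) (g : O) (hg : g ≠ 0)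
    (hle : domLE (Ω.log |g|) (Ω.log Ω.T)) (s : ℝ)
    (hs : domLT (Ω.log |g| - Ω.emb s * Ω.log Ω.T) (Ω.log Ω.T)) :
    (s ≠ 0 → domSim (Ω.D g) (Ω.emb s * g / Ω.T) ∧ domEq (Ω.D g) (g / Ω.T)) ∧
    (s = 0 → domLT (Ω.D g) (g / Ω.T)) ∧
    (¬ domEq g 1 →
      domLT (Ω.log |Ω.D g| - Ω.emb (s - 1) * Ω.log Ω.T) (Ω.log Ω.T)) := by
  set L := Ω.log Ω.T with hLdef
  set ℓ := Ω.log |g| with hℓdef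
  set δ := ℓ - Ω.emb s * L with hδdef
  have hT : (0 : O) < Ω.T := T_pos Ω
  have hT0 : Ω.T ≠ 0 := ne_of_gt hT
  have hTi : (0 : O) < Ω.T⁻¹ := inv_pos.2 hT
  have hLgt : gtReals Ω.emb L := gtReals_logT Ω
  have hLpos : (0 : O) < L := gt_pos Ω hLgt
  have hg0 : (0 : O) < |g| := abs_pos.2 hg
  have hDg : Ω.D g = g * Ω.D ℓ := by
    have h := D_log' Ω hg0
    rw [← hℓdef] at h
    rcases abs_cases g with ⟨h1, _⟩ | ⟨h1, _⟩
    · rw [h1] at h; linarith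
    · rw [h1, D_neg'] at h; linear_combination h
  have hDL : Ω.D L = Ω.T⁻¹ := D_logT Ω
  have hℓeq : ℓ = Ω.emb s * L + δ := by rw [hδdef]; ring
  have hDℓ : Ω.D ℓ = Ω.emb s * Ω.T⁻¹ + Ω.D δ := by
    have h := congrArg Ω.D hℓeq
    rwa [Ω.D_add, D_emb_mul, hDL] at h
  have hDδ : ∀ n : ℕ, (n : O) * |Ω.D δ| < Ω.T⁻¹ := by
    intro n
    have h := D_lt_of_domLT Ω hs hLgt n
    rwa [hDL] at h
  have hDδ1 : |Ω.D δ| < Ω.T⁻¹ := by have := hDδ 1; simpa using this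
  have hgT : |g / Ω.T| = |g| * Ω.T⁻¹ := by
    rw [abs_div, abs_of_pos hT, div_eq_mul_inv]
  refine ⟨?_, ?_, ?_⟩
  · -- Part 1 : s ≠ 0
    intro hsne
    have hs0 : (0 : ℝ) < |s| := abs_pos.2 hsne
    have hespos : (0 : O) < Ω.emb |s| := emb_pos Ω hs0
    set j : ℕ := ⌈|s|⁻¹⌉₊ with hjdef
    have hjO : (1 : O) ≤ (j : O) * Ω.emb |s| := by
      have hj1 : (1 : ℝ) ≤ (j : ℝ) * |s| := by
        have := Nat.le_ceil (|s|⁻¹)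
        calc (1 : ℝ) = |s|⁻¹ * |s| := by field_simp
          _ ≤ (j : ℝ) * |s| := by
              apply mul_le_mul_of_nonneg_right this (le_of_lt hs0)
      calc (1 : O) = Ω.emb 1 := (map_one Ω.emb).symm
        _ ≤ Ω.emb ((j : ℝ) * |s|) := emb_mono Ω hj1
        _ = (j : O) * Ω.emb |s| := by rw [map_mul, map_natCast]
    have hDgAB : Ω.D g = Ω.emb s * g / Ω.T + g * Ω.D δ := by
      rw [hDg, hDℓ]; field_simp
    have hAabs : |Ω.emb s * g / Ω.T| = Ω.emb |s| * |g| * Ω.T⁻¹ := by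
      rw [abs_div, abs_mul, abs_of_pos hT, emb_abs, div_eq_mul_inv]
    have hBabs : |g * Ω.D δ| = |g| * |Ω.D δ| := abs_mul _ _
    have hBA : ∀ k : ℕ, (k : O) * |g * Ω.D δ| < |Ω.emb s * g / Ω.T| := by
      intro k
      rw [hAabs, hBabs]
      have h1 := hDδ (k * j)
      push_cast at h1
      have hd0 : (0 : O) ≤ |Ω.D δ| := abs_nonneg _
      have hk0 : (0 : O) ≤ (k : O) := Nat.cast_nonneg k
      nlinarith [mul_lt_mul_of_pos_right h1 (mul_pos hespos hg0),
        mul_le_mul_of_nonneg_left hjO (mul_nonneg (mul_nonneg hk0 hd0) (le_of_lt hg0))]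
    have hADg : |Ω.emb s * g / Ω.T| ≤ |Ω.D g| + |g * Ω.D δ| := by
      calc |Ω.emb s * g / Ω.T| = |Ω.D g - g * Ω.D δ| := by rw [hDgAB]; ring_nf
        _ ≤ |Ω.D g| + |g * Ω.D δ| := abs_sub _ _
    have hBDg : |g * Ω.D δ| < |Ω.D g| := by
      have := hBA 2
      push_cast at this
      linarith
    constructor
    · -- domSim
      show domLT (Ω.D g - Ω.emb s * g / Ω.T) (Ω.D g)
      have hsub : Ω.D g - Ω.emb s * g / Ω.T = g * Ω.D δ := by rw [hDgAB]; ring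
      rw [hsub, domLT_iff]
      intro k
      have h1 := hBA (k + 1)
      push_cast at h1
      linarith
    · -- domEq with g / T
      have hgTpos : (0 : O) < |g| * Ω.T⁻¹ := mul_pos hg0 hTi
      constructor
      · refine ⟨⌈|s|⌉₊ + 1, ?_⟩
        rw [hgT]
        have hm : |s| + 1 ≤ ((⌈|s|⌉₊ + 1 : ℕ) : ℝ) := by
          push_cast
          linarith [Nat.le_ceil |s|]
        have hmO : Ω.emb |s| + 1 ≤ ((⌈|s|⌉₊ + 1 : ℕ) : O) := by
          calc Ω.emb |s| + 1 = Ω.emb (|s| + 1) := by rw [map_add, map_one]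
            _ ≤ Ω.emb ((⌈|s|⌉₊ + 1 : ℕ) : ℝ) := emb_mono Ω hm
            _ = ((⌈|s|⌉₊ + 1 : ℕ) : O) := map_natCast _ _
        have h2 : |Ω.D g| ≤ |Ω.emb s * g / Ω.T| + |g * Ω.D δ| := by
          rw [hDgAB]; exact abs_add_le _ _
        rw [hAabs, hBabs] at h2
        have h4 : |g| * |Ω.D δ| < |g| * Ω.T⁻¹ := mul_lt_mul_of_pos_left hDδ1 hg0
        have h5 : (Ω.emb |s| + 1) * (|g| * Ω.T⁻¹)
            ≤ ((⌈|s|⌉₊ + 1 : ℕ) : O) * (|g| * Ω.T⁻¹) :=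
          mul_le_mul_of_nonneg_right hmO (le_of_lt hgTpos)
        nlinarith
      · refine ⟨2 * j, ?_⟩
        rw [hgT]
        have h3 : |g| * Ω.T⁻¹ ≤ (j : O) * (Ω.emb |s| * |g| * Ω.T⁻¹) := by
          calc |g| * Ω.T⁻¹ = 1 * (|g| * Ω.T⁻¹) := (one_mul _).symm
            _ ≤ (j : O) * Ω.emb |s| * (|g| * Ω.T⁻¹) :=
                mul_le_mul_of_nonneg_right hjO (le_of_lt hgTpos)
            _ = (j : O) * (Ω.emb |s| * |g| * Ω.T⁻¹) := by ring
        rw [← hAabs] at h3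
        have h6 : (j : O) * |Ω.emb s * g / Ω.T| ≤ (j : O) * (2 * |Ω.D g|) := by
          apply mul_le_mul_of_nonneg_left _ (Nat.cast_nonneg j)
          linarith
        push_cast
        linarith
  · -- Part 2 : s = 0
    intro hsz
    subst hsz
    have hDδℓ : Ω.D ℓ = Ω.D δ := by
      rw [hDℓ, map_zero, zero_mul, zero_add]
    rw [domLT_iff]
    intro k
    rw [hgT, hDg, abs_mul, hDδℓ]
    have := hDδ k
    calc (k : O) * (|g| * |Ω.D δ|) = |g| * ((k : O) * |Ω.D δ|) := by ring
      _ < |g| * Ω.T⁻¹ := by exact mul_lt_mul_of_pos_left this hg0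
  · -- Part 3
    intro hne
    obtain ⟨hDℓ0, hloguL⟩ :
        Ω.D ℓ ≠ 0 ∧ domLT (Ω.log (Ω.T * |Ω.D ℓ|)) L := by
      by_cases hsz : s = 0
      · -- s = 0 : use ≉ 1 and the crux lower bound
        subst hsz
        have hDδℓ : Ω.D ℓ = Ω.D δ := by
          rw [hDℓ, map_zero, zero_mul, zero_add]
        have hm : gtReals Ω.emb |ℓ| := by
          rcases not_and_or.1 hne with h | h
          · have hgt : gtReals Ω.emb |g| := gtReals_of_nat Ω (fun n => by
              by_contra hc
              push_neg at hc
              exact h ⟨n, by rw [abs_one, mul_one]; exact hc⟩)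
            have hℓgt := log_gtReals Ω hgt
            rwa [abs_of_pos (gt_pos Ω hℓgt)]
          · have hsm : ∀ n : ℕ, (n : O) * |g| < 1 := fun n => by
              by_contra hc
              push_neg at hc
              exact h ⟨n, by rw [abs_one]; linarith⟩
            have hinv : gtReals Ω.emb |g|⁻¹ := gtReals_of_nat Ω (fun n => by
              have h1 := hsm n
              have h2 : (n : O) = (n : O) * |g| * |g|⁻¹ := by field_simp
              calc (n : O) = (n : O) * |g| * |g|⁻¹ := h2
                _ < 1 * |g|⁻¹ := by
                    apply mul_lt_mul_of_pos_right h1 (inv_pos.2 hg0)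
                _ = |g|⁻¹ := one_mul _)
            have hlog := log_gtReals Ω hinv
            rw [log_inv' Ω hg0] at hlog
            have hneg : ℓ < 0 := by
              have := gt_pos Ω hlog; linarith
            rw [abs_of_neg hneg]
            exact hlog
        have hDm : Ω.D |ℓ| = |Ω.D ℓ| := by
          have hp := Ω.D_pos_of_gt_reals _ hm
          rcases le_or_gt 0 ℓ with h | h
          · rw [abs_of_nonneg h] at hp ⊢
            rw [abs_of_pos hp]
          · rw [abs_of_neg h, D_neg'] at hp ⊢
            rw [abs_of_neg (by linarith : Ω.D ℓ < 0)]
        have hDℓ0 : Ω.D ℓ ≠ 0 := by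
          intro hz
          have hp := Ω.D_pos_of_gt_reals _ hm
          rw [hDm, hz, abs_zero] at hp
          exact lt_irrefl _ hp
        refine ⟨hDℓ0, ?_⟩
        have hu0 : (0 : O) < Ω.T * |Ω.D ℓ| :=
          mul_pos hT (abs_pos.2 hDℓ0)
        have hu1 : Ω.T * |Ω.D ℓ| < 1 := by
          have h1 : Ω.T * |Ω.D ℓ| < Ω.T * Ω.T⁻¹ := by
            rw [hDδℓ]
            exact mul_lt_mul_of_pos_left hDδ1 hT
          rwa [mul_inv_cancel₀ hT0] at h1
        have hlneg : Ω.log (Ω.T * |Ω.D ℓ|) < 0 := by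
          have := log_lt_log' Ω hu0 hu1
          rwa [log_one' Ω] at this
        rw [domLT_iff]
        intro k
        rw [abs_of_pos hLpos]
        rcases Nat.eq_zero_or_pos k with rfl | hk
        · simpa using hLpos
        · have h1 := crux Ω hm k hk
          rw [hDm] at h1
          have h2 : Ω.emb (-(1 / k)) * L < Ω.log (Ω.T * |Ω.D ℓ|) := by
            have h3 := log_lt_log' Ω (Ω.exp_pos _) h1
            rwa [Ω.log_exp] at h3
          rw [abs_of_neg hlneg]
          have h4 : -Ω.log (Ω.T * |Ω.D ℓ|) < Ω.emb (1 / k) * L := by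
            rw [map_neg, neg_mul] at h2
            linarith
          have h5 : (k : O) * (Ω.emb (1 / k) * L) = L := by
            rw [← map_natCast Ω.emb k, ← mul_assoc, ← map_mul]
            have hkk : (k : ℝ) * (1 / k) = 1 := by
              field_simp
            rw [hkk, map_one, one_mul]
          calc (k : O) * -Ω.log (Ω.T * |Ω.D ℓ|)
              < (k : O) * (Ω.emb (1 / k) * L) := by
                apply mul_lt_mul_of_pos_left h4
                exact_mod_cast hk
            _ = L := h5
      · -- s ≠ 0 : T|Dℓ| is bounded between nonzero reals
        have hs0 : (0 : ℝ) < |s| := abs_pos.2 hsz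
        have hespos : (0 : O) < Ω.emb |s| := emb_pos Ω hs0
        set j : ℕ := ⌈|s|⁻¹⌉₊ with hjdef
        have hjO : (1 : O) ≤ (j : O) * Ω.emb |s| := by
          have hj1 : (1 : ℝ) ≤ (j : ℝ) * |s| := by
            have := Nat.le_ceil (|s|⁻¹)
            calc (1 : ℝ) = |s|⁻¹ * |s| := by field_simp
              _ ≤ (j : ℝ) * |s| := by
                  apply mul_le_mul_of_nonneg_right this (le_of_lt hs0)
          calc (1 : O) = Ω.emb 1 := (map_one Ω.emb).symm
            _ ≤ Ω.emb ((j : ℝ) * |s|) := emb_mono Ω hj1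
            _ = (j : O) * Ω.emb |s| := by rw [map_mul, map_natCast]
        have hjpos : (0 : O) < (j : O) := by
          have h0 : 0 < j := Nat.ceil_pos.2 (by positivity)
          exact_mod_cast h0
        have h2Tδ : 2 * (Ω.T * |Ω.D δ|) < Ω.emb |s| := by
          have h1 := hDδ (2 * j)
          have h2 := mul_lt_mul_of_pos_left h1 hT
          rw [mul_inv_cancel₀ hT0] at h2
          push_cast at h2
          nlinarith [abs_nonneg (Ω.D δ)]
        have hTδ1 : Ω.T * |Ω.D δ| < 1 := by
          have h2 := mul_lt_mul_of_pos_left hDδ1 hT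
          rwa [mul_inv_cancel₀ hT0] at h2
        have habsDℓ : Ω.emb |s| * Ω.T⁻¹ - |Ω.D δ| ≤ |Ω.D ℓ| ∧
            |Ω.D ℓ| ≤ Ω.emb |s| * Ω.T⁻¹ + |Ω.D δ| := by
          have e1 : |Ω.emb s * Ω.T⁻¹| = Ω.emb |s| * Ω.T⁻¹ := by
            rw [abs_mul, emb_abs, abs_of_pos hTi]
          constructor
          · have h3 := abs_sub_abs_le_abs_sub (Ω.emb s * Ω.T⁻¹) (-(Ω.D δ))
            rw [abs_neg, sub_neg_eq_add, ← hDℓ, e1] at h3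
            exact h3
          · have h3 := abs_add_le (Ω.emb s * Ω.T⁻¹) (Ω.D δ)
            rw [← hDℓ, e1] at h3
            exact h3
        have hmul : ∀ a b : O, a ≤ b → Ω.T * a ≤ Ω.T * b := fun a b hab =>
          mul_le_mul_of_nonneg_left hab (le_of_lt hT)
        have h4 : Ω.T * (Ω.emb |s| * Ω.T⁻¹ - |Ω.D δ|)
            = Ω.emb |s| - Ω.T * |Ω.D δ| := by field_simp; try ring
        have h5 : Ω.T * (Ω.emb |s| * Ω.T⁻¹ + |Ω.D δ|)
            = Ω.emb |s| + Ω.T * |Ω.D δ| := by field_simp; try ring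
        have hlow : Ω.emb (|s| / 2) < Ω.T * |Ω.D ℓ| := by
          have e2 : Ω.emb |s| = 2 * Ω.emb (|s| / 2) := by
            calc Ω.emb |s| = Ω.emb (2 * (|s| / 2)) := by
                  rw [show (2 : ℝ) * (|s| / 2) = |s| by ring]
              _ = Ω.emb 2 * Ω.emb (|s| / 2) := map_mul _ _ _
              _ = 2 * Ω.emb (|s| / 2) := by rw [map_ofNat]
          have h6 := hmul _ _ habsDℓ.1
          rw [h4] at h6
          linarith
        have hhigh : Ω.T * |Ω.D ℓ| < Ω.emb (|s| + 1) := by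
          have h6 := hmul _ _ habsDℓ.2
          rw [h5] at h6
          rw [map_add, map_one]
          linarith
        have hs2 : (0 : ℝ) < |s| / 2 := by positivity
        have hDℓ0 : Ω.D ℓ ≠ 0 := by
          intro hz
          rw [hz, abs_zero, mul_zero] at hlow
          exact absurd hlow (not_lt.2 (le_of_lt (emb_pos Ω hs2)))
        refine ⟨hDℓ0, ?_⟩
        have hu0 : (0 : O) < Ω.T * |Ω.D ℓ| := (emb_pos Ω hs2).trans hlow
        have hlogl : Ω.emb (Real.log (|s| / 2)) < Ω.log (Ω.T * |Ω.D ℓ|) := by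
          have e3 : Ω.exp (Ω.emb (Real.log (|s| / 2))) = Ω.emb (|s| / 2) := by
            rw [Ω.exp_emb, Real.exp_log hs2]
          have h6 := log_lt_log' Ω (emb_pos Ω hs2) hlow
          rwa [← e3, Ω.log_exp] at h6
        have hlogh : Ω.log (Ω.T * |Ω.D ℓ|) < Ω.emb (Real.log (|s| + 1)) := by
          have e4 : Ω.exp (Ω.emb (Real.log (|s| + 1))) = Ω.emb (|s| + 1) := by
            rw [Ω.exp_emb, Real.exp_log (by positivity)]
          have h7 := log_lt_log' Ω hu0 hhigh
          rwa [← e4, Ω.log_exp] at h7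
        rw [domLT_iff]
        intro k
        rw [abs_of_pos hLpos]
        set C : ℝ := max |Real.log (|s| / 2)| |Real.log (|s| + 1)| with hC
        have hCb : |Ω.log (Ω.T * |Ω.D ℓ|)| ≤ Ω.emb C := by
          rw [abs_le]
          constructor
          · calc -Ω.emb C = Ω.emb (-C) := (map_neg _ _).symm
              _ ≤ Ω.emb (Real.log (|s| / 2)) := emb_mono Ω (by
                  have ha := le_max_left |Real.log (|s| / 2)| |Real.log (|s| + 1)|
                  have hb := neg_abs_le (Real.log (|s| / 2))
                  rw [hC]; linarith)
              _ ≤ Ω.log (Ω.T * |Ω.D ℓ|) := le_of_lt hlogl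
          · calc Ω.log (Ω.T * |Ω.D ℓ|) ≤ Ω.emb (Real.log (|s| + 1)) :=
                le_of_lt hlogh
              _ ≤ Ω.emb C := emb_mono Ω
                  (le_trans (le_abs_self _) (le_max_right _ _))
        calc (k : O) * |Ω.log (Ω.T * |Ω.D ℓ|)| ≤ (k : O) * Ω.emb C :=
              mul_le_mul_of_nonneg_left hCb (Nat.cast_nonneg k)
          _ = Ω.emb ((k : ℝ) * C) := by rw [map_mul, map_natCast]
          _ < L := hLgt _
    -- common conclusion
    have hDℓpos : (0 : O) < |Ω.D ℓ| := abs_pos.2 hDℓ0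
    have habs : |Ω.D g| = |g| * |Ω.D ℓ| := by rw [hDg, abs_mul]
    have hlogsplit : Ω.log |Ω.D g| = ℓ + Ω.log |Ω.D ℓ| := by
      rw [habs, log_mul' Ω hg0 hDℓpos]
    have hlogu : Ω.log (Ω.T * |Ω.D ℓ|) = L + Ω.log |Ω.D ℓ| :=
      log_mul' Ω hT hDℓpos
    have hrw : Ω.log |Ω.D g| - Ω.emb (s - 1) * L
        = δ + Ω.log (Ω.T * |Ω.D ℓ|) := by
      rw [hlogsplit, hlogu, map_sub, map_one, hδdef]
      ring
    rw [hrw]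
    exact domLT_add hs hloguL
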